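/- Every (2,n)-semigroup isomorphic to a (2,n)-semigroup of partial n-place functions is also isomorphic to a (2,n)-semigroup of full n-place functions: given a set Φ of partial n-place functions on A closed under the Mann compositions, adjoin a new element c to A and extend each f ∈ Φ to a full function f⁰ on A ∪ {c} by setting f⁰(x) = f(x) on dom(f) and f⁰(x) = c otherwise; then f ↦ f⁰ is an isomorphism of (Φ; ∘₁,…,∘ₙ) onto (Φ⁰; ∘₁,…,∘ₙ). -/

import Mathlib

/-- The type of partial `n`-place functions on `A`. -/
abbrev PFn (n : ℕ) (A : Type) := (Fin n → A) → Option A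

/-- The `i`-th Mann composition `f ∘ᵢ g` of partial functions. -/
def mann {n : ℕ} {A : Type} (i : Fin n) (f g : PFn n A) : PFn n A :=
  fun a => (g a).bind fun b => f (Function.update a i b)

/-- The `i`-th Mann composition of full (total) `n`-place functions on `B`. -/
def mannT {n : ℕ} {B : Type} (i : Fin n) (f g : (Fin n → B) → B) :
    (Fin n → B) → B :=
  fun a => f (Function.update a i (g a))

/-- The extension `f⁰` of a partial `n`-place function `f` on `A` to a full
`n`-place function on `A ∪ {c}`, where `A ∪ {c}` is modelled as `Option A`
with `none` playing the role of the new element `c`. -/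
def extend {n : ℕ} {A : Type} (f : PFn n A) : (Fin n → Option A) → Option A :=
  fun x => if h : ∀ i, (x i).isSome then f (fun i => (x i).get (h i)) else none

/-- Theorem 2: `f ↦ f⁰` is an isomorphism of a `(2,n)`-semigroup `Φ` of partial
`n`-place functions onto the `(2,n)`-semigroup `Φ⁰` of full `n`-place
functions on `A ∪ {c}`. -/
theorem extend_isomorphism {n : ℕ} {A : Type}
    (Φ : Set (PFn n A))
    (hΦ : ∀ i, ∀ f ∈ Φ, ∀ g ∈ Φ, mann i f g ∈ Φ) :
    Set.InjOn (extend (n := n) (A := A)) Φ ∧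
      ∀ i, ∀ f ∈ Φ, ∀ g ∈ Φ,
        extend (mann i f g) = mannT i (extend f) (extend g) := by
  constructor
  · intro f _ g _ hfg
    funext a
    have h := congrFun hfg (fun i => some (a i))
    simpa [extend] using h
  · intro i f _ g _
    funext x
    by_cases h : ∀ j, (x j).isSome
    · -- all coordinates defined
      set a : Fin n → A := fun j => (x j).get (h j) with ha
      have hx : ∀ j, x j = some (a j) := fun j => (Option.some_get (h j)).symm
      have hg : extend g x = g a := by simp [extend, dif_pos h]; rfl
      cases hga : g a with
      | none =>
        have : extend (mann i f g) x = none := by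
          simp [extend, dif_pos h, mann, ← ha, hga]
        rw [this, mannT, hg, hga]
        rw [extend, dif_neg]
        intro hall
        have := hall i
        simp [Function.update_self] at this
      | some b =>
        have hall : ∀ j, ((Function.update x i (some b)) j).isSome := by
          intro j
          by_cases hj : j = i
          · subst hj; simp
          · simp [Function.update_of_ne hj, h j]
        have : extend (mann i f g) x = f (Function.update a i b) := by
          simp [extend, dif_pos h, mann, ← ha, hga]
        rw [this, mannT, hg, hga, extend, dif_pos hall]
        congr 1
        funext j
        by_cases hj : j = i
        · subst hj; simp
        · simp [Function.update_of_ne hj, ← ha]; rfl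
    · -- some coordinate undefined
      have hl : extend (mann i f g) x = none := by simp [extend, dif_neg h]
      rw [hl, mannT]
      have hg : extend g x = none := by simp [extend, dif_neg h]
      rw [hg, extend, dif_neg]
      intro hall
      apply h
      intro j
      by_cases hj : j = i
      · subst hj
        have := hall j
        simp [Function.update_self] at this
      · have := hall j
        simpa [Function.update_of_ne hj] using this
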